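/- If (X_n)_{n≥1} is i.i.d. given Y, then for every measurable function ψ : E×F → ℝ with E[|ψ(X₁,Y)|] < ∞, the averages (1/n) Σ_{k=1}^n ψ(X_k, Y) converge almost surely, as n → ∞, to the conditional expectation E[ψ(X₁,Y) | Y]. -/

import Mathlib

open MeasureTheory ProbabilityTheory Filter
open scoped NNReal ENNReal Topology

lemma aux_exists_pisystem (E : Type*) [MeasurableSpace E] [StandardBorelSpace E] :
    ∃ C : ℚ → Set E, (∀ q, MeasurableSet (C q)) ∧ IsPiSystem (Set.range C) ∧
      ‹MeasurableSpace E› = MeasurableSpace.generateFrom (Set.range C) := by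
  obtain ⟨f, hf⟩ := exists_measurableEmbedding_real E
  refine ⟨fun q => f ⁻¹' Set.Iio (q : ℝ), fun q => hf.measurable measurableSet_Iio, ?_, ?_⟩
  · rintro s ⟨q, rfl⟩ t ⟨r, rfl⟩ -
    refine ⟨min q r, ?_⟩
    rw [← Set.preimage_inter, Set.Iio_inter_Iio]
    push_cast
    rfl
  · have h1 : ‹MeasurableSpace E› = MeasurableSpace.comap f (borel ℝ) := by
      refine le_antisymm (fun s hs => ?_) ?_
      · refine ⟨f '' s, ?_, hf.injective.preimage_image s⟩
        rw [← BorelSpace.measurable_eq (α := ℝ)]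
        exact hf.measurableSet_image.2 hs
      · rw [← BorelSpace.measurable_eq (α := ℝ)]
        exact hf.measurable.comap_le
    rw [h1, Real.borel_eq_generateFrom_Iio_rat, MeasurableSpace.comap_generateFrom]
    congr 1
    ext s
    constructor
    · rintro ⟨x, hx, rfl⟩
      simp only [Set.mem_iUnion, Set.mem_singleton_iff] at hx
      obtain ⟨q, rfl⟩ := hx
      exact ⟨q, rfl⟩
    · rintro ⟨q, rfl⟩
      exact ⟨Set.Iio (q : ℝ), by simp, rfl⟩

lemma aux_prod_ite {M : Type*} [CommMonoid M] (n i j : ℕ) (hi : i < n) (hj : j < n)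
    (hij : i ≠ j) (a b : M) :
    ∏ l : Fin n, (if (l : ℕ) = i then a else if (l : ℕ) = j then b else 1) = a * b := by
  classical
  have hI : (⟨i, hi⟩ : Fin n) ∈ (Finset.univ : Finset (Fin n)) := Finset.mem_univ _
  rw [← Finset.mul_prod_erase Finset.univ _ hI]
  simp only [if_pos rfl]
  have hJ : (⟨j, hj⟩ : Fin n) ∈ (Finset.univ : Finset (Fin n)).erase ⟨i, hi⟩ := by
    simp [Finset.mem_erase, Fin.ext_iff, hij.symm]
  rw [← Finset.mul_prod_erase _ _ hJ]
  have hone : ∏ l ∈ ((Finset.univ : Finset (Fin n)).erase ⟨i, hi⟩).erase ⟨j, hj⟩,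
      (if (l : ℕ) = i then a else if (l : ℕ) = j then b else 1) = 1 := by
    refine Finset.prod_eq_one fun l hl => ?_
    simp only [Finset.mem_erase] at hl
    rw [if_neg (fun h => hl.2.1 (Fin.ext h)), if_neg (fun h => hl.1 (Fin.ext h))]
  rw [hone]
  simp [hij.symm]

open scoped NNReal ENNReal

/- STATEMENT 17: conditional strong law of large numbers for sequences that are
i.i.d. given Y.  (X_n)_{n ≥ 1} are E-valued random variables on a complete
probability space, Y is F-valued; conditional probabilities are conditional
expectations of indicator functions given σ(Y). -/
theorem stmt_17
    {Ω E F : Type*} [m0 : MeasurableSpace Ω]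
    [MetricSpace E] [CompleteSpace E] [TopologicalSpace.SeparableSpace E] [MeasurableSpace E] [BorelSpace E]
    [MetricSpace F] [CompleteSpace F] [TopologicalSpace.SeparableSpace F] [MeasurableSpace F] [BorelSpace F]
    (μ : Measure Ω) [IsProbabilityMeasure μ]
    (hcomplete : ∀ s t : Set Ω, s ⊆ t → MeasurableSet t → μ t = 0 → MeasurableSet s)
    (X : ℕ → Ω → E) (Y : Ω → F)
    (hX : ∀ n, Measurable (X n)) (hY : Measurable Y)
    -- conditional independence given Y :
    (h_indep : ∀ (n : ℕ) (B : Fin n → Set E), (∀ i, MeasurableSet (B i)) →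
      (μ[Set.indicator {ω | ∀ i : Fin n, X ((i : ℕ) + 1) ω ∈ B i} (fun _ => (1 : ℝ)) |
          MeasurableSpace.comap Y inferInstance]
        =ᵐ[μ] fun ω => ∏ i : Fin n,
          (μ[Set.indicator {ω' | X ((i : ℕ) + 1) ω' ∈ B i} (fun _ => (1 : ℝ)) |
            MeasurableSpace.comap Y inferInstance]) ω))
    -- identical conditional distributions given Y :
    (h_ident : ∀ (n k : ℕ) (B : Set E), 1 ≤ n → 1 ≤ k → MeasurableSet B →
      (μ[Set.indicator {ω | X n ω ∈ B} (fun _ => (1 : ℝ)) | MeasurableSpace.comap Y inferInstance]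
        =ᵐ[μ]
       μ[Set.indicator {ω | X k ω ∈ B} (fun _ => (1 : ℝ)) | MeasurableSpace.comap Y inferInstance])) :
    ∀ ψ : E × F → ℝ, Measurable ψ →
      Integrable (fun ω => ψ (X 1 ω, Y ω)) μ →
      ∀ᵐ ω ∂μ, Tendsto
        (fun n : ℕ => (1 / (n : ℝ)) * ∑ k ∈ Finset.range n, ψ (X (k + 1) ω, Y ω))
        atTop
        (𝓝 ((μ[fun ω' => ψ (X 1 ω', Y ω') | MeasurableSpace.comap Y inferInstance]) ω)) := by
  intro ψ hψ hint
  -- nonemptiness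
  have hΩne : Nonempty Ω := by
    by_contra h
    rw [not_nonempty_iff] at h
    have h1 : μ Set.univ = 1 := measure_univ
    rw [Set.univ_eq_empty_iff.2 h, measure_empty] at h1
    exact zero_ne_one h1
  haveI : Nonempty E := ⟨X 0 hΩne.some⟩
  -- the sequence as a single random variable
  set Z : Ω → ℕ → E := fun ω n => X (n + 1) ω with hZdef
  have hZ : Measurable Z := measurable_pi_lambda _ fun n => hX (n + 1)
  set κ := condDistrib Z Y μ with hκdef
  set ν := μ.map Y with hνdef
  haveI : IsProbabilityMeasure ν := Measure.isProbabilityMeasure_map hY.aemeasurable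
  haveI : IsProbabilityMeasure (μ.map fun ω => (Y ω, Z ω)) :=
    Measure.isProbabilityMeasure_map (hY.aemeasurable.prodMk hZ.aemeasurable)
  have hcompat : ν ⊗ₘ κ = μ.map (fun ω => (Y ω, Z ω)) := by
    have h1 : κ = (μ.map fun ω => (Y ω, Z ω)).condKernel := by rw [hκdef, condDistrib]
    have h2 : ν = (μ.map fun ω => (Y ω, Z ω)).fst := (Measure.fst_map_prodMk₀ hZ.aemeasurable).symm
    rw [h1, h2, Measure.disintegrate]
  -- basic bridges
  have hmeq : ∀ {g h : F → ℝ≥0∞}, Measurable g → Measurable h →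
      MeasurableSet {y : F | g y = h y} := by
    intro g h hg hh
    have : {y : F | g y = h y} = {y | g y ≤ h y} ∩ {y | h y ≤ g y} := by
      ext y; exact le_antisymm_iff
    rw [this]
    exact (measurableSet_le hg hh).inter (measurableSet_le hh hg)
  have hcd : ∀ (i : ℕ) (B : Set E), MeasurableSet B →
      (μ[Set.indicator {ω' | X (i + 1) ω' ∈ B} (fun _ => (1 : ℝ)) |
          MeasurableSpace.comap Y inferInstance])
        =ᵐ[μ] fun ω => (κ (Y ω) ((fun ξ : ℕ → E => ξ i) ⁻¹' B)).toReal :=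
    fun i B hB => (condDistrib_ae_eq_condExp hY hZ ((measurable_pi_apply i) hB)).symm
  -- identical distribution at the kernel level
  have hA : ∀ (i : ℕ) (B : Set E), MeasurableSet B →
      ∀ᵐ y ∂ν, κ y ((fun ξ : ℕ → E => ξ i) ⁻¹' B) = κ y ((fun ξ : ℕ → E => ξ 0) ⁻¹' B) := by
    intro i B hBm
    have h1 := hcd i B hBm
    have h0 := hcd 0 B hBm
    have hid := h_ident (i + 1) 1 B (Nat.le_add_left 1 i) le_rfl hBm
    have hcomb : (fun ω => (κ (Y ω) ((fun ξ : ℕ → E => ξ i) ⁻¹' B)).toReal)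
        =ᵐ[μ] fun ω => (κ (Y ω) ((fun ξ : ℕ → E => ξ 0) ⁻¹' B)).toReal :=
      h1.symm.trans (hid.trans h0)
    have h2 : ∀ᵐ ω ∂μ, κ (Y ω) ((fun ξ : ℕ → E => ξ i) ⁻¹' B)
        = κ (Y ω) ((fun ξ : ℕ → E => ξ 0) ⁻¹' B) :=
      hcomb.mono fun ω hω =>
        (ENNReal.toReal_eq_toReal_iff' (measure_ne_top _ _) (measure_ne_top _ _)).1 hω
    rw [hνdef, ae_map_iff hY.aemeasurable
      (hmeq (κ.measurable_coe ((measurable_pi_apply i) hBm))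
        (κ.measurable_coe ((measurable_pi_apply 0) hBm)))]
    exact h2
  -- pairwise independence at the kernel level
  have hB : ∀ (i j : ℕ), i < j → ∀ (B₁ B₂ : Set E), MeasurableSet B₁ → MeasurableSet B₂ →
      ∀ᵐ y ∂ν, κ y ((fun ξ : ℕ → E => ξ i) ⁻¹' B₁ ∩ (fun ξ : ℕ → E => ξ j) ⁻¹' B₂)
        = κ y ((fun ξ : ℕ → E => ξ i) ⁻¹' B₁) * κ y ((fun ξ : ℕ → E => ξ j) ⁻¹' B₂) := by
    intro i j hij B₁ B₂ hm1 hm2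
    set B' : Fin (j + 1) → Set E :=
      fun l => if (l : ℕ) = i then B₁ else if (l : ℕ) = j then B₂ else Set.univ with hB'def
    have hB'meas : ∀ l, MeasurableSet (B' l) := by
      intro l
      simp only [hB'def]
      split_ifs
      · exact hm1
      · exact hm2
      · exact MeasurableSet.univ
    have hind := h_indep (j + 1) B' hB'meas
    have hmi : MeasurableSet ((fun ξ : ℕ → E => ξ i) ⁻¹' B₁) := (measurable_pi_apply i) hm1
    have hmj : MeasurableSet ((fun ξ : ℕ → E => ξ j) ⁻¹' B₂) := (measurable_pi_apply j) hm2
    have hset : {ω | ∀ l : Fin (j + 1), X ((l : ℕ) + 1) ω ∈ B' l}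
        = Z ⁻¹' ((fun ξ : ℕ → E => ξ i) ⁻¹' B₁ ∩ (fun ξ : ℕ → E => ξ j) ⁻¹' B₂) := by
      ext ω
      simp only [Set.mem_setOf_eq, Set.mem_preimage, Set.mem_inter_iff]
      constructor
      · intro h
        constructor
        · have := h ⟨i, lt_trans hij (Nat.lt_succ_self j)⟩
          simpa only [hB'def, if_pos rfl] using this
        · have := h ⟨j, Nat.lt_succ_self j⟩
          simp only [hB'def, if_neg (Nat.ne_of_gt hij)] at this
          simpa using this
      · rintro ⟨ha, hb⟩ l
        simp only [hB'def]
        split_ifs with hli hlj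
        · rw [hli]; exact ha
        · rw [hlj]; exact hb
        · trivial
    have hfac : ∀ l : Fin (j + 1),
        (μ[Set.indicator {ω' | X ((l : ℕ) + 1) ω' ∈ B' l} (fun _ => (1 : ℝ)) |
            MeasurableSpace.comap Y inferInstance])
          =ᵐ[μ] fun ω =>
            (if (l : ℕ) = i then (κ (Y ω) ((fun ξ : ℕ → E => ξ i) ⁻¹' B₁)).toReal
              else if (l : ℕ) = j then (κ (Y ω) ((fun ξ : ℕ → E => ξ j) ⁻¹' B₂)).toReal
              else 1) := by
      intro l
      by_cases hli : (l : ℕ) = i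
      · have hBl : B' l = B₁ := by simp only [hB'def, if_pos hli]
        have heq : (fun ω =>
            (if (l : ℕ) = i then (κ (Y ω) ((fun ξ : ℕ → E => ξ i) ⁻¹' B₁)).toReal
              else if (l : ℕ) = j then (κ (Y ω) ((fun ξ : ℕ → E => ξ j) ⁻¹' B₂)).toReal
              else 1))
            = fun ω => (κ (Y ω) ((fun ξ : ℕ → E => ξ i) ⁻¹' B₁)).toReal := by
          funext ω; rw [if_pos hli]
        rw [heq, hBl, hli]
        exact hcd i B₁ hm1
      · by_cases hlj : (l : ℕ) = j
        · have hBl : B' l = B₂ := by simp only [hB'def, if_neg hli, if_pos hlj]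
          have heq : (fun ω =>
              (if (l : ℕ) = i then (κ (Y ω) ((fun ξ : ℕ → E => ξ i) ⁻¹' B₁)).toReal
                else if (l : ℕ) = j then (κ (Y ω) ((fun ξ : ℕ → E => ξ j) ⁻¹' B₂)).toReal
                else 1))
              = fun ω => (κ (Y ω) ((fun ξ : ℕ → E => ξ j) ⁻¹' B₂)).toReal := by
            funext ω; rw [if_neg hli, if_pos hlj]
          rw [heq, hBl, hlj]
          exact hcd j B₂ hm2
        · have hBl : B' l = Set.univ := by simp only [hB'def, if_neg hli, if_neg hlj]
          rw [hBl]
          have hsu : {ω' : Ω | X ((l : ℕ) + 1) ω' ∈ (Set.univ : Set E)} = Set.univ := by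
            ext ω'; simp
          rw [hsu, Set.indicator_univ, condExp_const hY.comap_le]
          refine Filter.Eventually.of_forall fun ω => ?_
          simp only [if_neg hli, if_neg hlj]
    have hprod : (fun ω => ∏ l : Fin (j + 1),
          (μ[Set.indicator {ω' | X ((l : ℕ) + 1) ω' ∈ B' l} (fun _ => (1 : ℝ)) |
            MeasurableSpace.comap Y inferInstance]) ω)
        =ᵐ[μ] fun ω => (κ (Y ω) ((fun ξ : ℕ → E => ξ i) ⁻¹' B₁)).toReal
            * (κ (Y ω) ((fun ξ : ℕ → E => ξ j) ⁻¹' B₂)).toReal := by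
      have hall : ∀ᵐ ω ∂μ, ∀ l : Fin (j + 1),
          (μ[Set.indicator {ω' | X ((l : ℕ) + 1) ω' ∈ B' l} (fun _ => (1 : ℝ)) |
            MeasurableSpace.comap Y inferInstance]) ω
          = (if (l : ℕ) = i then (κ (Y ω) ((fun ξ : ℕ → E => ξ i) ⁻¹' B₁)).toReal
              else if (l : ℕ) = j then (κ (Y ω) ((fun ξ : ℕ → E => ξ j) ⁻¹' B₂)).toReal
              else 1) := (ae_all_iff).2 fun l => hfac l
      refine hall.mono fun ω hω => ?_
      dsimp only
      rw [Finset.prod_congr rfl fun l (_ : l ∈ Finset.univ) => hω l]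
      exact aux_prod_ite (j + 1) i j (lt_trans hij (Nat.lt_succ_self j)) (Nat.lt_succ_self j)
        (Nat.ne_of_lt hij) _ _
    have hpair := condDistrib_ae_eq_condExp (μ := μ) hY hZ (hmi.inter hmj)
    rw [← hset] at hpair
    have hcomb : (fun ω => (κ (Y ω)
          ((fun ξ : ℕ → E => ξ i) ⁻¹' B₁ ∩ (fun ξ : ℕ → E => ξ j) ⁻¹' B₂)).toReal)
        =ᵐ[μ] fun ω => (κ (Y ω) ((fun ξ : ℕ → E => ξ i) ⁻¹' B₁)).toReal
            * (κ (Y ω) ((fun ξ : ℕ → E => ξ j) ⁻¹' B₂)).toReal :=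
      hpair.trans (hind.trans hprod)
    have h2 : ∀ᵐ ω ∂μ, κ (Y ω) ((fun ξ : ℕ → E => ξ i) ⁻¹' B₁ ∩ (fun ξ : ℕ → E => ξ j) ⁻¹' B₂)
        = κ (Y ω) ((fun ξ : ℕ → E => ξ i) ⁻¹' B₁) * κ (Y ω) ((fun ξ : ℕ → E => ξ j) ⁻¹' B₂) := by
      refine hcomb.mono fun ω hω => ?_
      dsimp only at hω
      rw [← ENNReal.toReal_mul] at hω
      exact (ENNReal.toReal_eq_toReal_iff' (measure_ne_top _ _)
        (ENNReal.mul_ne_top (measure_ne_top _ _) (measure_ne_top _ _))).1 hω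
    rw [hνdef, ae_map_iff hY.aemeasurable
      (hmeq (h := fun y =>
          κ y ((fun ξ : ℕ → E => ξ i) ⁻¹' B₁) * κ y ((fun ξ : ℕ → E => ξ j) ⁻¹' B₂))
        (κ.measurable_coe (hmi.inter hmj))
        ((κ.measurable_coe hmi).mul (κ.measurable_coe hmj)))]
    exact h2
  -- integrability at the kernel level
  set f : F × (ℕ → E) → ℝ := fun p => ψ (p.2 0, p.1) with hfdef
  have hf : Measurable f :=
    hψ.comp (((measurable_pi_apply 0).comp measurable_snd).prodMk measurable_fst)
  have hfint : Integrable f (ν ⊗ₘ κ) := by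
    rw [hcompat, integrable_map_measure hf.aestronglyMeasurable
      (hY.aemeasurable.prodMk hZ.aemeasurable)]
    exact hint
  have hC : ∀ᵐ y ∂ν, Integrable (fun ξ => ψ (ξ 0, y)) (κ y) :=
    ((Measure.integrable_compProd_iff hfint.aestronglyMeasurable).1 hfint).1
  -- countable π-system
  obtain ⟨C, hCmeas, hCpi, hCgen⟩ := aux_exists_pisystem E
  -- the good set of y
  have hgood : ∀ᵐ y ∂ν,
      (∀ (q : ℚ) (i : ℕ), κ y ((fun ξ : ℕ → E => ξ i) ⁻¹' C q)
          = κ y ((fun ξ : ℕ → E => ξ 0) ⁻¹' C q)) ∧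
      (∀ (q r : ℚ) (i j : ℕ), i < j →
          κ y ((fun ξ : ℕ → E => ξ i) ⁻¹' C q ∩ (fun ξ : ℕ → E => ξ j) ⁻¹' C r)
            = κ y ((fun ξ : ℕ → E => ξ i) ⁻¹' C q) * κ y ((fun ξ : ℕ → E => ξ j) ⁻¹' C r)) ∧
      Integrable (fun ξ => ψ (ξ 0, y)) (κ y) := by
    refine (((ae_all_iff).2 fun q => (ae_all_iff).2 fun i => hA i (C q) (hCmeas q)).and
      ?_).and hC |>.mono fun y hy => ⟨hy.1.1, hy.1.2, hy.2⟩
    refine (ae_all_iff).2 fun q => (ae_all_iff).2 fun r => (ae_all_iff).2 fun i =>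
      (ae_all_iff).2 fun j => ?_
    rcases lt_or_ge i j with hij | hij
    · exact (hB i j hij (C q) (C r) (hCmeas q) (hCmeas r)).mono fun y hy _ => hy
    · exact Filter.Eventually.of_forall fun y hij' => absurd hij' (not_lt.2 hij)
  -- the limit function
  set g : F → ℝ := fun y => ∫ ξ, ψ (ξ 0, y) ∂κ y with hgdef
  have hg : Measurable g := by
    have := MeasureTheory.StronglyMeasurable.integral_kernel_prod_right
      (κ := κ) (f := fun y ξ => ψ (ξ 0, y)) hf.stronglyMeasurable
    exact this.measurable
  -- conditional strong law for a.e. y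
  have main : ∀ᵐ y ∂ν, ∀ᵐ ξ ∂κ y, Tendsto
      (fun n : ℕ => (1 / (n : ℝ)) * ∑ k ∈ Finset.range n, ψ (ξ k, y)) atTop (𝓝 (g y)) := by
    filter_upwards [hgood] with y hy
    obtain ⟨h1, h2, h3⟩ := hy
    haveI : IsProbabilityMeasure (κ y) := inferInstance
    have hident : ∀ i : ℕ,
        IdentDistrib (fun ξ : ℕ → E => ξ i) (fun ξ : ℕ → E => ξ 0) (κ y) (κ y) := by
      intro i
      refine ⟨(measurable_pi_apply i).aemeasurable, (measurable_pi_apply 0).aemeasurable, ?_⟩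
      refine ext_of_generate_finite (Set.range C) hCgen hCpi (fun s hs => ?_)
        (by simp [Measure.map_apply (measurable_pi_apply i) MeasurableSet.univ,
              Measure.map_apply (measurable_pi_apply 0) MeasurableSet.univ])
      obtain ⟨q, rfl⟩ := hs
      rw [Measure.map_apply (measurable_pi_apply i) (hCmeas q),
        Measure.map_apply (measurable_pi_apply 0) (hCmeas q)]
      exact h1 q i
    have hpipre : ∀ k : ℕ,
        IsPiSystem (Set.preimage (fun ξ : ℕ → E => ξ k) '' Set.range C) := by
      intro k s hs t ht hne
      obtain ⟨u, hu, rfl⟩ := hs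
      obtain ⟨v, hv, rfl⟩ := ht
      rw [← Set.preimage_inter] at hne ⊢
      refine ⟨u ∩ v, hCpi u hu v hv ?_, rfl⟩
      obtain ⟨x, hx⟩ := hne
      exact ⟨x k, hx⟩
    have hgenpre : ∀ k : ℕ, MeasurableSpace.comap (fun ξ : ℕ → E => ξ k) ‹MeasurableSpace E›
        = MeasurableSpace.generateFrom
            (Set.preimage (fun ξ : ℕ → E => ξ k) '' Set.range C) := by
      intro k
      conv_lhs => rw [hCgen]
      rw [MeasurableSpace.comap_generateFrom]
    have hindep : ∀ i j : ℕ, i ≠ j →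
        IndepFun (fun ξ : ℕ → E => ξ i) (fun ξ : ℕ → E => ξ j) (κ y) := by
      have key : ∀ i j : ℕ, i < j →
          IndepFun (fun ξ : ℕ → E => ξ i) (fun ξ : ℕ → E => ξ j) (κ y) := by
        intro i j hij
        rw [IndepFun_iff_Indep]
        refine IndepSets.indep (measurable_pi_apply i).comap_le (measurable_pi_apply j).comap_le
          (hpipre i) (hpipre j) (hgenpre i) (hgenpre j) ?_
        rintro t1 t2 ⟨u, ⟨q, rfl⟩, rfl⟩ ⟨v, ⟨r, rfl⟩, rfl⟩
        exact Filter.Eventually.of_forall fun _ => h2 q r i j hij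
      intro i j hij
      rcases hij.lt_or_gt with h | h
      · exact key i j h
      · exact (key j i h).symm
    set W : ℕ → (ℕ → E) → ℝ := fun k ξ => ψ (ξ k, y) with hWdef
    have hψy : Measurable (fun x : E => ψ (x, y)) :=
      hψ.comp (measurable_id.prodMk measurable_const)
    have hint0 : Integrable (W 0) (κ y) := h3
    have hWindep : Pairwise (Function.onFun (IndepFun · · (κ y)) W) :=
      fun i j hij => (hindep i j hij).comp hψy hψy
    have hWident : ∀ i, IdentDistrib (W i) (W 0) (κ y) (κ y) :=
      fun i => (hident i).comp hψy
    have hslln := strong_law_ae_real W hint0 hWindep hWident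
    refine hslln.mono fun ξ hξ => ?_
    have heq : (fun n : ℕ => (1 / (n : ℝ)) * ∑ k ∈ Finset.range n, ψ (ξ k, y))
        = fun n : ℕ => (∑ k ∈ Finset.range n, W k ξ) / n := by
      funext n
      rw [one_div, inv_mul_eq_div]
    rw [heq]
    exact hξ
  -- transfer through compProd and map
  have hSmeas : MeasurableSet {p : F × (ℕ → E) | Tendsto
      (fun n : ℕ => (1 / (n : ℝ)) * ∑ k ∈ Finset.range n, ψ (p.2 k, p.1)) atTop (𝓝 (g p.1))} := by
    refine measurableSet_tendsto_fun (fun n => ?_) (hg.comp measurable_fst)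
    exact (measurable_const.mul (Finset.measurable_sum _ fun k _ =>
      hψ.comp (((measurable_pi_apply k).comp measurable_snd).prodMk measurable_fst)))
  have hae := Measure.ae_compProd_of_ae_ae hSmeas main
  rw [hcompat, ae_map_iff (hY.aemeasurable.prodMk hZ.aemeasurable) hSmeas] at hae
  -- identify the conditional expectation
  have hce : μ[fun ω' => ψ (X 1 ω', Y ω') | MeasurableSpace.comap Y inferInstance]
      =ᵐ[μ] fun ω => g (Y ω) := by
    have := condExp_prod_ae_eq_integral_condDistrib (μ := μ) (X := Y) (Y := Z)
      hY hZ.aemeasurable (f := f) hf.stronglyMeasurable hint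
    exact this
  filter_upwards [hae, hce] with ω h1 h2
  rw [h2]
  exact h1
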